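/- Let U, V ∈ U(2) be unitary matrices having no eigenvalue equal to -1, and define Hermitian matrices A = (I-U)(I+U)^{-1}, B = (I-V)(I+V)^{-1}, and M = (A+B)/2. Then I + M is invertible and W = (I-M)(I+M)^{-1} is unitary with no eigenvalue equal to -1; moreover W is symmetric in U and V (U★V = V★U). -/

import Mathlib

open Matrix

/-- The Cayley transform `A_U = i(I-U)(I+U)⁻¹` of a unitary `U`. -/
noncomputable def cayley (U : Matrix (Fin 2) (Fin 2) ℂ) : Matrix (Fin 2) (Fin 2) ℂ :=
  Complex.I • ((1 - U) * (1 + U)⁻¹)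

/-- The composed boundary condition `W = U ★ V`: the inverse Cayley transform of the
average `M = (A_U + A_V)/2` of the Cayley transforms, `W = (I - (-i)M)(I + (-i)M)⁻¹`. -/
noncomputable def starComp (U V : Matrix (Fin 2) (Fin 2) ℂ) : Matrix (Fin 2) (Fin 2) ℂ :=
  (1 - (-Complex.I) • ((1 / 2 : ℂ) • (cayley U + cayley V)))
    * (1 + (-Complex.I) • ((1 / 2 : ℂ) • (cayley U + cayley V)))⁻¹

section aux

variable {n : Type*} [Fintype n] [DecidableEq n]

lemma aux_isUnit_of_ker (A : Matrix n n ℂ) (h : ∀ v, A.mulVec v = 0 → v = 0) : IsUnit A := by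
  rw [← Matrix.mulVec_injective_iff_isUnit]
  intro x y hxy
  have h0 : A.mulVec (x - y) = 0 := by
    rw [Matrix.mulVec_sub, hxy, sub_self]
  exact sub_eq_zero.mp (h _ h0)

lemma aux_isUnit_one_add (U : Matrix n n ℂ) (h : ∀ v, U.mulVec v = -v → v = 0) :
    IsUnit (1 + U) := by
  apply aux_isUnit_of_ker
  intro v hv
  apply h
  rw [Matrix.add_mulVec, Matrix.one_mulVec] at hv
  exact eq_neg_of_add_eq_zero_right hv

lemma aux_inv_comm (A B : Matrix n n ℂ) (hB : IsUnit B) (h : A * B = B * A) :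
    A * B⁻¹ = B⁻¹ * A := by
  have : Invertible B := hB.invertible
  rw [← Matrix.invOf_eq_nonsing_inv]
  exact Commute.invOf_right h

lemma aux_dot_self_ne {v : n → ℂ} (hv : v ≠ 0) : star v ⬝ᵥ v ≠ 0 := by
  intro h0
  apply hv
  funext i
  have hsum : ∑ j, ((Complex.normSq (v j) : ℝ) : ℂ) = 0 := by
    rw [← h0]
    simp [dotProduct, Complex.star_def, Complex.normSq_eq_conj_mul_self]
  have hre : ∑ j, Complex.normSq (v j) = 0 := by
    have := congrArg Complex.re hsum
    simpa using this
  have := (Finset.sum_eq_zero_iff_of_nonneg (fun j _ => Complex.normSq_nonneg (v j))).mp hre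
    i (Finset.mem_univ i)
  simpa using Complex.normSq_eq_zero.mp this

lemma aux_eig_nonreal {M : Matrix n n ℂ} (hM : M.IsHermitian)
    {v : n → ℂ} {c : ℂ} (h : M.mulVec v = c • v) (hc : star c ≠ c) : v = 0 := by
  by_contra hv
  have hs : star v ⬝ᵥ v ≠ 0 := aux_dot_self_ne hv
  have hss : star (star v ⬝ᵥ v) = star v ⬝ᵥ v := by
    rw [← star_dotProduct]
  have hd : star v ⬝ᵥ M.mulVec v = c * (star v ⬝ᵥ v) := by
    rw [h, dotProduct_smul, smul_eq_mul]
  have hreal : star (star v ⬝ᵥ M.mulVec v) = star v ⬝ᵥ M.mulVec v := by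
    calc star (star v ⬝ᵥ M.mulVec v) = star (M.mulVec v) ⬝ᵥ v :=
          (star_dotProduct (M.mulVec v) v).symm
      _ = (star v ᵥ* Mᴴ) ⬝ᵥ v := by rw [Matrix.star_mulVec]
      _ = (star v ᵥ* M) ⬝ᵥ v := by rw [hM.eq]
      _ = star v ⬝ᵥ M.mulVec v := (Matrix.dotProduct_mulVec _ _ _).symm
  rw [hd, star_mul', hss] at hreal
  exact hc (mul_right_cancel₀ hs hreal)

end aux

lemma aux_cayley_hermitian (U : Matrix (Fin 2) (Fin 2) ℂ)
    (hU : U ∈ Matrix.unitaryGroup (Fin 2) ℂ)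
    (h1 : IsUnit (1 + U)) : (cayley U).IsHermitian := by
  have hUS : U * star U = 1 := Matrix.mem_unitaryGroup_iff.mp hU
  have hSU : star U * U = 1 := Matrix.mem_unitaryGroup_iff'.mp hU
  have hd1 : IsUnit (1 + U).det := (Matrix.isUnit_iff_isUnit_det _).mp h1
  have hSinv : (1 + star U)⁻¹ = (1 + U)⁻¹ * U := by
    apply Matrix.inv_eq_right_inv
    have hfac : (1 + star U) = star U * (1 + U) := by
      rw [Matrix.mul_add, Matrix.mul_one, hSU, add_comm]
    rw [hfac]
    simp only [Matrix.mul_assoc]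
    rw [← Matrix.mul_assoc (1 + U) (1 + U)⁻¹ U, Matrix.mul_nonsing_inv _ hd1,
      Matrix.one_mul, hSU]
  have hcomm : (1 - U) * (1 + U)⁻¹ = (1 + U)⁻¹ * (1 - U) :=
    aux_inv_comm _ _ h1 (by noncomm_ring)
  show (Complex.I • ((1 - U) * (1 + U)⁻¹))ᴴ = Complex.I • ((1 - U) * (1 + U)⁻¹)
  have e2 : U * (1 - star U) = -(1 - U) := by
    rw [Matrix.mul_sub, Matrix.mul_one, hUS, neg_sub]
  calc (Complex.I • ((1 - U) * (1 + U)⁻¹))ᴴ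
      = star Complex.I • (((1 + U)⁻¹)ᴴ * (1 - U)ᴴ) := by
        rw [Matrix.conjTranspose_smul, Matrix.conjTranspose_mul]
    _ = (-Complex.I) • ((1 + star U)⁻¹ * (1 - star U)) := by
        rw [Matrix.conjTranspose_nonsing_inv, Matrix.conjTranspose_add,
          Matrix.conjTranspose_sub, Matrix.conjTranspose_one,
          ← Matrix.star_eq_conjTranspose, Complex.star_def, Complex.conj_I]
    _ = (-Complex.I) • ((1 + U)⁻¹ * (U * (1 - star U))) := by
        rw [hSinv, Matrix.mul_assoc]
    _ = (-Complex.I) • (-((1 + U)⁻¹ * (1 - U))) := by rw [e2, Matrix.mul_neg]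
    _ = Complex.I • ((1 + U)⁻¹ * (1 - U)) := by rw [smul_neg, neg_smul, neg_neg]
    _ = Complex.I • ((1 - U) * (1 + U)⁻¹) := by rw [hcomm]

/-- Composition law of boundary conditions: if `U, V ∈ U(2)` have no eigenvalue `-1`,
then the Cayley transforms `A, B` are Hermitian, `I + (-i)M` with `M = (A+B)/2` is
invertible, and `W = U ★ V` is unitary with no eigenvalue `-1`; moreover `U★V = V★U`. -/
theorem composition_law_boundary_conditions
    (U V : Matrix (Fin 2) (Fin 2) ℂ)
    (hU : U ∈ Matrix.unitaryGroup (Fin 2) ℂ) (hV : V ∈ Matrix.unitaryGroup (Fin 2) ℂ)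
    (hUno : ∀ v : Fin 2 → ℂ, U.mulVec v = -v → v = 0)
    (hVno : ∀ v : Fin 2 → ℂ, V.mulVec v = -v → v = 0) :
    (cayley U).IsHermitian ∧ (cayley V).IsHermitian ∧
    IsUnit (1 + (-Complex.I) • ((1 / 2 : ℂ) • (cayley U + cayley V))) ∧
    starComp U V ∈ Matrix.unitaryGroup (Fin 2) ℂ ∧
    (∀ v : Fin 2 → ℂ, (starComp U V).mulVec v = -v → v = 0) ∧
    starComp U V = starComp V U := by
  have hA : (cayley U).IsHermitian := aux_cayley_hermitian U hU (aux_isUnit_one_add U hUno)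
  have hB : (cayley V).IsHermitian := aux_cayley_hermitian V hV (aux_isUnit_one_add V hVno)
  set M : Matrix (Fin 2) (Fin 2) ℂ := (1 / 2 : ℂ) • (cayley U + cayley V) with hM_def
  set N : Matrix (Fin 2) (Fin 2) ℂ := (-Complex.I) • M with hN_def
  have hM : M.IsHermitian := by
    show Mᴴ = M
    rw [hM_def, Matrix.conjTranspose_smul, Matrix.conjTranspose_add, hA.eq, hB.eq]
    norm_num
  have hstarI : star (-Complex.I) ≠ -Complex.I := by
    simp [Complex.star_def, Complex.ext_iff]
    norm_num
  have hstarI' : star Complex.I ≠ Complex.I := by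
    simp [Complex.star_def, Complex.ext_iff]
    norm_num
  have h_plus : IsUnit (1 + N) := by
    apply aux_isUnit_of_ker
    intro v hv
    rw [Matrix.add_mulVec, Matrix.one_mulVec, Matrix.smul_mulVec] at hv
    have h2 : (-Complex.I) • M.mulVec v = -v := eq_neg_of_add_eq_zero_right hv
    have h3 : M.mulVec v = (-Complex.I) • v := by
      have := congrArg (fun w => Complex.I • w) h2
      simpa only [smul_smul, mul_neg, Complex.I_mul_I, neg_neg, one_smul, neg_smul, smul_neg] using this
    exact aux_eig_nonreal hM h3 hstarI
  have h_minus : IsUnit (1 - N) := by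
    apply aux_isUnit_of_ker
    intro v hv
    rw [Matrix.sub_mulVec, Matrix.one_mulVec, Matrix.smul_mulVec] at hv
    have h2 : (-Complex.I) • M.mulVec v = v := by
      have := sub_eq_zero.mp hv
      exact this.symm
    have h3 : M.mulVec v = Complex.I • v := by
      have := congrArg (fun w => Complex.I • w) h2
      simpa only [smul_smul, mul_neg, Complex.I_mul_I, neg_neg, one_smul, neg_smul, smul_neg] using this
    exact aux_eig_nonreal hM h3 hstarI'
  have hdp : IsUnit (1 + N).det := (Matrix.isUnit_iff_isUnit_det _).mp h_plus
  have hdm : IsUnit (1 - N).det := (Matrix.isUnit_iff_isUnit_det _).mp h_minus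
  have hNH : Nᴴ = -N := by
    rw [hN_def, Matrix.conjTranspose_smul, hM.eq]
    simp [Complex.star_def, Complex.conj_I, neg_smul]
  have hW_def : starComp U V = (1 - N) * (1 + N)⁻¹ := rfl
  have e1 : (1 + N)ᴴ = 1 - N := by
    rw [Matrix.conjTranspose_add, Matrix.conjTranspose_one, hNH, ← sub_eq_add_neg]
  have e2 : (1 - N)ᴴ = 1 + N := by
    rw [Matrix.conjTranspose_sub, Matrix.conjTranspose_one, hNH, sub_neg_eq_add]
  have hWH : star (starComp U V) = (1 - N)⁻¹ * (1 + N) := by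
    rw [Matrix.star_eq_conjTranspose, hW_def, Matrix.conjTranspose_mul,
      Matrix.conjTranspose_nonsing_inv, e1, e2]
  have hPQ : (1 + N) * (1 - N) = (1 - N) * (1 + N) := by noncomm_ring
  have hmem : starComp U V ∈ Matrix.unitaryGroup (Fin 2) ℂ := by
    rw [Matrix.mem_unitaryGroup_iff']
    rw [hWH, hW_def]
    have hip : Invertible (1 + N) := h_plus.invertible
    have him : Invertible (1 - N) := h_minus.invertible
    rw [← Matrix.invOf_eq_nonsing_inv (1 + N), ← Matrix.invOf_eq_nonsing_inv (1 - N)]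
    calc ⅟(1 - N) * (1 + N) * ((1 - N) * ⅟(1 + N))
        = ⅟(1 - N) * ((1 + N) * (1 - N)) * ⅟(1 + N) := by
          simp only [Matrix.mul_assoc]
      _ = ⅟(1 - N) * ((1 - N) * (1 + N)) * ⅟(1 + N) := by rw [hPQ]
      _ = 1 := by
          simp only [← Matrix.mul_assoc, invOf_mul_self, Matrix.one_mul, mul_invOf_self]
  refine ⟨hA, hB, h_plus, hmem, ?_, ?_⟩
  · intro v hv
    rw [hW_def] at hv
    set w : Fin 2 → ℂ := (1 + N)⁻¹.mulVec v with hw_def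
    have hvw : v = (1 + N).mulVec w := by
      rw [hw_def, Matrix.mulVec_mulVec, Matrix.mul_nonsing_inv _ hdp, Matrix.one_mulVec]
    have h1 : (1 - N).mulVec w = -v := by
      rw [hw_def, Matrix.mulVec_mulVec]
      exact hv
    have hsum : ((1 - N) + (1 + N)).mulVec w = 0 := by
      rw [Matrix.add_mulVec, h1, ← hvw]
      simp
    have he : (1 - N) + (1 + N) = (2 : ℂ) • (1 : Matrix (Fin 2) (Fin 2) ℂ) := by
      rw [two_smul]
      noncomm_ring
    rw [he, Matrix.smul_mulVec, Matrix.one_mulVec] at hsum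
    have hw0 : w = 0 := by
      rcases smul_eq_zero.mp hsum with h | h
      · exact absurd h two_ne_zero
      · exact h
    rw [hvw, hw0, Matrix.mulVec_zero]
  · unfold starComp
    rw [add_comm (cayley U)]
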